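/- Let X be a Polish space and let I be a σ-ideal on X generated by closed sets with X ∉ I. Let F ⊆ X × ω^ω be an analytic set (the graph of a multifunction from X to subsets of ω^ω). Then there exists a Gδ set G ⊆ X with G ∉ I such that for every open set U ⊆ ω^ω, the set {x ∈ G : ∃ y ∈ U, (x,y) ∈ F} is a countable union of sets each of which is Gδ in the subspace topology of G (i.e., it is Σ⁰₃ relative to G). -/

import Mathlib

open Set

/-- A σ-ideal: closed under subsets and countable unions. -/
def SigmaIdeal {X : Type*} (I : Set (Set X)) : Prop :=
  (∀ A B : Set X, A ⊆ B → B ∈ I → A ∈ I) ∧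
  ∀ f : ℕ → Set X, (∀ n, f n ∈ I) → (⋃ n, f n) ∈ I

/-- `I` is generated by closed sets: every member of `I` is contained in a countable
union of closed sets belonging to `I`. -/
def GeneratedByClosedSets {X : Type*} [TopologicalSpace X] (I : Set (Set X)) : Prop :=
  ∀ A ∈ I, ∃ f : ℕ → Set X, (∀ n, IsClosed (f n) ∧ f n ∈ I) ∧ A ⊆ ⋃ n, f n

/-- `A` is `I`-perfect: nonempty, and for every open `U` the set `A ∩ U` is empty or
`I`-positive. -/
def IdealPerfect {X : Type*} [TopologicalSpace X] (I : Set (Set X)) (A : Set X) : Prop :=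
  A.Nonempty ∧ ∀ U : Set X, IsOpen U → A ∩ U = ∅ ∨ A ∩ U ∉ I

section Auxiliary

open Topology MeasureTheory TopologicalSpace Filter


section MeagreAux
variable {α : Type*} [TopologicalSpace α]

lemma isMeagre_iUnion' {ι : Sort*} [Countable ι] {s : ι → Set α}
    (hs : ∀ i, IsMeagre (s i)) : IsMeagre (⋃ i, s i) := by
  rw [IsMeagre, compl_iUnion]
  exact countable_iInter_mem.mpr hs

lemma isMeagre_biUnion' {ι : Type*} {S : Set ι} (hS : S.Countable) {f : ι → Set α}
    (h : ∀ i ∈ S, IsMeagre (f i)) : IsMeagre (⋃ i ∈ S, f i) := by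
  rw [IsMeagre, compl_iUnion₂]
  exact (countable_bInter_mem hS).mpr h

lemma exists_baire_hull [SecondCountableTopology α] (E : Set α) :
    ∃ H : Set α, BaireMeasurableSet H ∧ E ⊆ H ∧
      ∀ Z : Set α, BaireMeasurableSet Z → E ⊆ Z → IsMeagre (H \ Z) := by
  obtain ⟨b, hbc, -, hb⟩ := exists_countable_basis α
  set S : Set (Set α) := {V | V ∈ b ∧ IsMeagre (E ∩ V)} with hS
  set U : Set α := ⋃₀ S with hUdef
  have hUo : IsOpen U := isOpen_sUnion fun V hV => hb.isOpen hV.1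
  have hEU : IsMeagre (E ∩ U) := by
    have h1 : E ∩ U = ⋃ V ∈ S, E ∩ V := by
      rw [hUdef, sUnion_eq_biUnion, inter_iUnion₂]
    rw [h1]
    exact isMeagre_biUnion' (hbc.mono fun V hV => hV.1) fun V hV => hV.2
  refine ⟨Uᶜ ∪ (E ∩ U), (hUo.baireMeasurableSet.compl).union hEU.baireMeasurableSet,
    fun x hx => ?_, fun Z hZ hEZ => ?_⟩
  · by_cases hxU : x ∈ U
    · exact Or.inr ⟨hx, hxU⟩
    · exact Or.inl hxU
  · have key : IsMeagre (Uᶜ \ Z) := by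
      obtain ⟨O, hOo, hWO⟩ := ((hUo.baireMeasurableSet.compl).diff hZ).residualEq_isOpen
      have hR : {x | x ∈ Uᶜ \ Z ↔ x ∈ O} ∈ residual α := eventuallyEq_set.mp hWO
      have hdiff1 : IsMeagre ((Uᶜ \ Z) \ O) := by
        rw [IsMeagre]
        refine Filter.mem_of_superset hR fun x hx => ?_
        simp only [mem_setOf_eq] at hx
        intro h
        exact h.2 (hx.mp h.1)
      have hdiff2 : IsMeagre (O \ (Uᶜ \ Z)) := by
        rw [IsMeagre]
        refine Filter.mem_of_superset hR fun x hx => ?_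
        simp only [mem_setOf_eq] at hx
        intro h
        exact h.2 (hx.mpr h.1)
      have hOU : O ⊆ U := by
        intro x hxO
        obtain ⟨V, hVb, hxV, hVO⟩ := hb.exists_subset_of_mem_open hxO hOo
        refine subset_sUnion_of_mem (show V ∈ S from ⟨hVb, ?_⟩) hxV
        refine hdiff2.mono fun z hz => ?_
        exact ⟨hVO hz.2, fun hW => hW.2 (hEZ hz.1)⟩
      refine hdiff1.mono (t := Uᶜ \ Z) (s := (Uᶜ \ Z) \ O) fun x hx => ⟨hx, fun hxO => hx.1 (hOU hxO)⟩
    have hun : IsMeagre ((Uᶜ \ Z) ∪ (E ∩ U)) := by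
      rw [IsMeagre, compl_union]
      exact Filter.inter_mem key hEU
    refine hun.mono fun x hx => ?_
    rcases hx.1 with h | h
    · exact Or.inl ⟨h, hx.2⟩
    · exact Or.inr h

end MeagreAux


section Cyl

/-- The cylinder of a finite sequence. -/
def cylList (s : List ℕ) : Set (ℕ → ℕ) := {w | ∀ i, (h : i < s.length) → w i = s.get ⟨i, h⟩}

lemma cylList_nil : cylList [] = univ := by
  ext w; simp [cylList]

lemma cylList_eq_iUnion (s : List ℕ) : cylList s = ⋃ n, cylList (s ++ [n]) := by
  ext w
  simp only [cylList, mem_setOf_eq, mem_iUnion]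
  constructor
  · intro hw
    refine ⟨w s.length, fun i h => ?_⟩
    rcases lt_or_eq_of_le (Nat.lt_succ_iff.mp (by simpa using h)) with h' | h'
    · rw [hw i h']
      simp [List.getElem_append, h']
    · subst h'
      simp
  · intro ⟨n, hn⟩ i h
    rw [hn i (by simp; omega)]
    simp [List.getElem_append, h]

lemma mem_cylList_ofFn {k : ℕ} {y : ℕ → ℕ} {w : ℕ → ℕ} :
    w ∈ cylList (List.ofFn fun i : Fin k => y i) ↔ ∀ i < k, w i = y i := by
  simp only [cylList, mem_setOf_eq, List.length_ofFn, List.get_ofFn]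
  constructor
  · intro h i hi; simpa using h i hi
  · intro h i hi; simpa using h i hi

lemma mem_range_of_mem_closure_cyl {α : Type*} [MetricSpace α] {f : (ℕ → ℕ) → α}
    (hf : Continuous f) {x : α} {y : ℕ → ℕ}
    (hx : ∀ k : ℕ, x ∈ closure (f '' cylList (List.ofFn fun i : Fin k => y i))) :
    x ∈ range f := by
  have key : ∀ k : ℕ, ∃ w, w ∈ cylList (List.ofFn fun i : Fin k => y i) ∧
      dist x (f w) < 1 / (k + 1) := by
    intro k
    obtain ⟨z, hz, hdist⟩ := Metric.mem_closure_iff.1 (hx k) _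
      (by positivity : (0:ℝ) < 1 / (k + 1))
    obtain ⟨w, hw, rfl⟩ := hz
    exact ⟨w, hw, hdist⟩
  choose w hw hd using key
  have hwy : Filter.Tendsto w Filter.atTop (nhds y) := by
    rw [tendsto_pi_nhds]
    intro i
    refine tendsto_const_nhds.congr' ?_
    filter_upwards [Filter.eventually_gt_atTop i] with k hk
    exact ((mem_cylList_ofFn.1 (hw k)) i hk).symm
  have h1 : Filter.Tendsto (fun k => f (w k)) Filter.atTop (nhds (f y)) :=
    (hf.tendsto y).comp hwy
  have h2 : Filter.Tendsto (fun k => f (w k)) Filter.atTop (nhds x) := by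
    rw [tendsto_iff_dist_tendsto_zero]
    refine squeeze_zero (fun k => dist_nonneg) (fun k => ?_)
      tendsto_one_div_add_atTop_nhds_zero_nat
    rw [dist_comm]
    exact (hd k).le
  exact ⟨y, tendsto_nhds_unique h1 h2⟩

end Cyl

section AnalyticBM

theorem analyticSet_baireMeasurableSet {α : Type*} [TopologicalSpace α] [PolishSpace α]
    {A : Set α} (hA : MeasureTheory.AnalyticSet A) : BaireMeasurableSet A := by
  letI := upgradeIsCompletelyMetrizable α
  rw [MeasureTheory.AnalyticSet] at hA
  rcases hA with rfl | ⟨f, hf, rfl⟩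
  · exact (show IsMeagre (∅ : Set α) by rw [IsMeagre, compl_empty]; exact univ_mem).baireMeasurableSet
  have hclBM : ∀ s : List ℕ, BaireMeasurableSet (closure (f '' cylList s)) :=
    fun s => BaireMeasurableSet.of_compl isClosed_closure.isOpen_compl.baireMeasurableSet
  choose H hHbm hHsub hHhull using fun s : List ℕ => exists_baire_hull (f '' cylList s)
  set H' : List ℕ → Set α := fun s => H s ∩ closure (f '' cylList s) with hH'def
  have hH'bm : ∀ s, BaireMeasurableSet (H' s) := fun s => (hHbm s).inter (hclBM s)
  have hH'sub : ∀ s, f '' cylList s ⊆ H' s :=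
    fun s => subset_inter (hHsub s) subset_closure
  set M : Set α := ⋃ s : List ℕ, (H' s \ ⋃ n : ℕ, H' (s ++ [n])) with hMdef
  have hM : IsMeagre M := by
    refine isMeagre_iUnion' fun s => ?_
    have hz : BaireMeasurableSet (⋃ n : ℕ, H' (s ++ [n])) :=
      BaireMeasurableSet.iUnion fun n => hH'bm (s ++ [n])
    have hsub : f '' cylList s ⊆ ⋃ n : ℕ, H' (s ++ [n]) := by
      rw [cylList_eq_iUnion s, image_iUnion]
      exact iUnion_mono fun n => hH'sub (s ++ [n])
    exact (hHhull s _ hz hsub).mono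
      (diff_subset_diff_left inter_subset_left)
  have hAH : range f ⊆ H' [] := by
    have : range f = f '' cylList [] := by rw [cylList_nil, image_univ]
    rw [this]
    exact hH'sub []
  have hback : H' [] \ M ⊆ range f := by
    rintro x ⟨hx0, hxM⟩
    have step : ∀ s : List ℕ, x ∈ H' s → ∃ n, x ∈ H' (s ++ [n]) := by
      intro s hs
      by_contra hc
      push_neg at hc
      exact hxM (mem_iUnion.2 ⟨s, hs, by simpa using hc⟩)
    let seq : ℕ → {s : List ℕ // x ∈ H' s} := fun k =>
      Nat.rec ⟨[], hx0⟩
        (fun _ p => ⟨p.1 ++ [(step p.1 p.2).choose], (step p.1 p.2).choose_spec⟩) k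
    let y : ℕ → ℕ := fun k => (step (seq k).1 (seq k).2).choose
    have hseq : ∀ k, (seq (k + 1)).1 = (seq k).1 ++ [y k] := fun k => rfl
    have hlist : ∀ k, (seq k).1 = List.ofFn (fun i : Fin k => y i) := by
      intro k
      induction k with
      | zero => simp [seq]
      | succ k ih =>
        rw [hseq k, ih, List.ofFn_succ']
        simp [List.concat_eq_append]
    refine mem_range_of_mem_closure_cyl hf (y := y) fun k => ?_
    have := (seq k).2
    rw [hlist k] at this
    exact this.2
  have hmeag : IsMeagre (H' [] \ range f) := by
    refine hM.mono fun x hx => ?_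
    by_contra hxM
    exact hx.2 (hback ⟨hx.1, hxM⟩)
  refine (hH'bm []).congr ?_
  rw [eventuallyEq_set]
  refine Filter.mem_of_superset hmeag fun x hx => ?_
  simp only [mem_setOf_eq]
  exact ⟨fun h => by_contra fun hn => hx ⟨h, hn⟩, fun h => hAH h⟩

end AnalyticBM

lemma isGδ_image_val {X : Type*} [TopologicalSpace X] [PolishSpace X] {C : Set X}
    (hC : IsClosed C) {t : Set C} (ht : IsGδ t) : IsGδ (Subtype.val '' t : Set X) := by
  letI := upgradeIsCompletelyMetrizable X
  obtain ⟨T, hTo, hTc, rfl⟩ := ht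
  choose! u hu hpre using fun s (hs : s ∈ T) => isOpen_induced_iff.1 (hTo s hs)
  have himg : Subtype.val '' (⋂₀ T) = C ∩ ⋂ s ∈ T, u s := by
    ext x
    simp only [mem_image, mem_sInter, mem_inter_iff, mem_iInter]
    constructor
    · rintro ⟨z, hz, rfl⟩
      refine ⟨z.2, fun s hs => ?_⟩
      have h1 := hz s hs
      rw [← hpre s hs] at h1
      exact h1
    · rintro ⟨hxC, hx⟩
      refine ⟨⟨x, hxC⟩, fun s hs => ?_, rfl⟩
      rw [← hpre s hs]
      exact hx s hs
  rw [himg]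
  exact hC.isGδ.inter (IsGδ.biInter_of_isOpen hTc fun s hs => hu s hs)

section Ideal

lemma sigmaIdeal_sUnion {X : Type*} {I : Set (Set X)} (hI : SigmaIdeal I) (h0 : ∅ ∈ I)
    {S : Set (Set X)} (hS : S.Countable) (h : ∀ s ∈ S, s ∈ I) : ⋃₀ S ∈ I := by
  rcases S.eq_empty_or_nonempty with rfl | hne
  · simpa using h0
  obtain ⟨g, rfl⟩ := hS.exists_eq_range hne
  rw [sUnion_range]
  exact hI.2 g fun n => h _ (mem_range_self n)

lemma sigmaIdeal_union {X : Type*} {I : Set (Set X)} (hI : SigmaIdeal I) {a b : Set X}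
    (ha : a ∈ I) (hb : b ∈ I) : a ∪ b ∈ I := by
  have hsub : a ∪ b ⊆ ⋃ n : ℕ, (if n = 0 then a else b) := by
    intro x hx
    rcases hx with h | h
    · exact mem_iUnion.2 ⟨0, by simpa⟩
    · exact mem_iUnion.2 ⟨1, by simpa⟩
  exact hI.1 _ _ hsub (hI.2 _ fun n => by split_ifs <;> assumption)

end Ideal

lemma isGδ_of_subsingleton' {X : Type*} [TopologicalSpace X] {G : Set X}
    (hsub : ∀ a b : ↥G, a = b) (T : Set ↥G) : IsGδ T := by
  rcases T.eq_empty_or_nonempty with rfl | ⟨a, ha⟩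
  · exact IsGδ.empty
  · have : T = univ := eq_univ_of_forall fun b => (hsub b a) ▸ ha
    rw [this]
    exact IsGδ.univ

end Auxiliary

open Topology MeasureTheory TopologicalSpace Filter in
theorem analytic_multifunction_sigma03_measurable_restriction
    {X : Type*} [TopologicalSpace X] [PolishSpace X]
    (I : Set (Set X)) (hI : SigmaIdeal I) (hgen : GeneratedByClosedSets I)
    (hX : (Set.univ : Set X) ∉ I)
    (F : Set (X × (ℕ → ℕ))) (hF : MeasureTheory.AnalyticSet F) :
    ∃ G : Set X, IsGδ G ∧ G ∉ I ∧
      ∀ U : Set (ℕ → ℕ), IsOpen U →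
        ∃ S : ℕ → Set G, (∀ n, IsGδ (S n)) ∧
          {p : G | ∃ y ∈ U, ((p : X), y) ∈ F} = ⋃ n, S n := by
  classical
  by_cases hsing : ∃ x : X, {x} ∉ I
  · obtain ⟨x, hx⟩ := hsing
    letI := upgradeIsCompletelyMetrizable X
    refine ⟨{x}, isClosed_singleton.isGδ, hx, fun U hU => ?_⟩
    have hss : ∀ a b : ↥({x} : Set X), a = b := fun a b =>
      Subtype.ext ((mem_singleton_iff.1 a.2).trans (mem_singleton_iff.1 b.2).symm)
    exact ⟨fun _ => {p : ↥({x} : Set X) | ∃ y ∈ U, ((p : X), y) ∈ F},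
      fun n => isGδ_of_subsingleton' hss _, (iUnion_const _).symm⟩
  push_neg at hsing
  rcases isEmpty_or_nonempty X with hXe | hXne
  · refine ⟨univ, IsGδ.univ, hX, fun U hU => ?_⟩
    have hss : ∀ a b : ↥(univ : Set X), a = b := fun a => (hXe.false a.1).elim
    exact ⟨fun _ => {p : ↥(univ : Set X) | ∃ y ∈ U, ((p : X), y) ∈ F},
      fun n => isGδ_of_subsingleton' hss _, (iUnion_const _).symm⟩
  obtain ⟨x₀⟩ := hXne
  have h0 : ∅ ∈ I := hI.1 ∅ {x₀} (empty_subset _) (hsing x₀)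
  obtain ⟨bX, hbXc, -, hbX⟩ := exists_countable_basis X
  set W : Set X := ⋃₀ {V | V ∈ bX ∧ V ∈ I} with hWdef
  have hWI : W ∈ I := sigmaIdeal_sUnion hI h0 (hbXc.mono fun V hV => hV.1) fun V hV => hV.2
  have hWo : IsOpen W := isOpen_sUnion fun V hV => hbX.isOpen hV.1
  set X₀ : Set X := Wᶜ with hX₀def
  have hX₀c : IsClosed X₀ := hWo.isClosed_compl
  have hX₀I : X₀ ∉ I := by
    intro h
    refine hX (hI.1 univ (X₀ ∪ W) (fun x _ => ?_) (sigmaIdeal_union hI h hWI))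
    by_cases hxW : x ∈ W
    · exact mem_union_right _ hxW
    · exact mem_union_left _ hxW
  have hND : ∀ C : Set X, IsClosed C → C ∈ I →
      ∀ V : Set X, IsOpen V → V ∩ X₀ ⊆ C → V ∩ X₀ = ∅ := by
    intro C _ hCI V hVo hVC
    have hVI : V ∈ I := by
      have hsub : V ⊆ (V ∩ X₀) ∪ W := by
        intro x hx
        by_cases hxW : x ∈ W
        · exact mem_union_right _ hxW
        · exact mem_union_left _ ⟨hx, hxW⟩
      exact hI.1 _ _ hsub (sigmaIdeal_union hI (hI.1 _ _ hVC hCI) hWI)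
    have hVW : V ⊆ W := by
      intro x hxV
      obtain ⟨V', hV'b, hxV', hV'V⟩ := hbX.exists_subset_of_mem_open hxV hVo
      have hV'S : V' ∈ {V | V ∈ bX ∧ V ∈ I} := mem_setOf.2 ⟨hV'b, hI.1 _ _ hV'V hVI⟩
      exact subset_sUnion_of_mem hV'S hxV'
    rw [eq_empty_iff_forall_notMem]
    rintro x ⟨hxV, hxX₀⟩
    exact hxX₀ (hVW hxV)
  haveI hYpol : PolishSpace ↥X₀ := hX₀c.polishSpace
  have hX₀ne : X₀.Nonempty := nonempty_iff_ne_empty.2 fun h => hX₀I (h ▸ h0)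
  haveI : Nonempty ↥X₀ := hX₀ne.to_subtype
  haveI : BaireSpace ↥X₀ := by
    letI := upgradeIsCompletelyMetrizable ↥X₀
    infer_instance
  obtain ⟨bN, hbNc, -, hbN⟩ := exists_countable_basis (ℕ → ℕ)
  obtain ⟨e, he⟩ : ∃ e : ℕ → Set (ℕ → ℕ), insert ∅ bN = range e :=
    (hbNc.insert ∅).exists_eq_range (insert_nonempty _ _)
  have heo : ∀ n, IsOpen (e n) := by
    intro n
    have hmem : e n ∈ insert ∅ bN := he ▸ mem_range_self n
    rcases mem_insert_iff.1 hmem with h | h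
    · rw [h]; exact isOpen_empty
    · exact hbN.isOpen h
  set A : ℕ → Set X := fun n => Prod.fst '' (F ∩ (univ ×ˢ e n)) with hAdef
  have hAan : ∀ n, AnalyticSet (A n) := by
    intro n
    have hFo : AnalyticSet (F ∩ (univ ×ˢ e n)) := by
      rw [MeasureTheory.AnalyticSet] at hF
      rcases hF with h | ⟨g, hg, hgr⟩
      · rw [h, empty_inter]; exact analyticSet_empty
      · rw [← hgr, ← image_preimage_eq_range_inter]
        exact ((isOpen_univ.prod (heo n)).preimage hg).analyticSet_image hg
    exact hFo.image_of_continuous continuous_fst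
  have hA'bm : ∀ n, BaireMeasurableSet (Subtype.val ⁻¹' (A n) : Set ↥X₀) := fun n =>
    analyticSet_baireMeasurableSet ((hAan n).preimage continuous_subtype_val)
  choose O' hO'o hO'eq using fun n => (hA'bm n).residualEq_isOpen
  choose V' hV'o hV'pre using fun n => isOpen_induced_iff.1 (hO'o n)
  have hR : (⋂ n, {z : ↥X₀ | z ∈ (Subtype.val ⁻¹' (A n) : Set ↥X₀) ↔ z ∈ O' n})
      ∈ residual ↥X₀ :=
    countable_iInter_mem.2 fun n => eventuallyEq_set.mp (hO'eq n)
  obtain ⟨t, htR, htGδ, htd⟩ := mem_residual.1 hR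
  refine ⟨Subtype.val '' t, isGδ_image_val hX₀c htGδ, ?_, ?_⟩
  · intro hGI
    obtain ⟨C, hC, hGsub⟩ := hgen _ hGI
    have htmeag : IsMeagre t := by
      refine flip IsMeagre.mono ?_ (show t ⊆ ⋃ n, (Subtype.val ⁻¹' (C n) : Set ↥X₀) from ?_)
      · refine isMeagre_iUnion' fun n => ?_
        have hclosed : IsClosed (Subtype.val ⁻¹' (C n) : Set ↥X₀) :=
          (hC n).1.preimage continuous_subtype_val
        have hint : interior (Subtype.val ⁻¹' (C n) : Set ↥X₀) = ∅ := by
          rcases eq_empty_or_nonempty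
            (interior (Subtype.val ⁻¹' (C n) : Set ↥X₀)) with h | ⟨z, hz⟩
          · exact h
          · exfalso
            obtain ⟨o, hosub, hoo, hzo⟩ := mem_interior.1 hz
            obtain ⟨V, hVo, hVpre⟩ := isOpen_induced_iff.1 hoo
            have hVC : V ∩ X₀ ⊆ C n := by
              rintro x ⟨hxV, hxX₀⟩
              exact hosub (show (⟨x, hxX₀⟩ : ↥X₀) ∈ o by rw [← hVpre]; exact hxV)
            have hemp := hND (C n) (hC n).1 (hC n).2 V hVo hVC
            rw [eq_empty_iff_forall_notMem] at hemp
            refine hemp z.1 ⟨?_, z.2⟩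
            rw [← hVpre] at hzo
            exact hzo
        rw [IsMeagre]
        exact residual_of_dense_open hclosed.isOpen_compl
          (by rwa [← interior_eq_empty_iff_dense_compl])
      · intro z hz
        have hzC : z.1 ∈ ⋃ n, C n := hGsub ⟨z, hz, rfl⟩
        obtain ⟨n, hn⟩ := mem_iUnion.1 hzC
        exact mem_iUnion.2 ⟨n, hn⟩
    have htres : t ∈ residual ↥X₀ := mem_residual.2 ⟨t, Subset.rfl, htGδ, htd⟩
    have hres : (∅ : Set ↥X₀) ∈ residual ↥X₀ := by
      have h2 := Filter.inter_mem htres htmeag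
      rwa [inter_compl_self] at h2
    exact absurd (dense_of_mem_residual hres).nonempty not_nonempty_empty
  · intro U hU
    refine ⟨fun n => {q : ↥(Subtype.val '' t : Set X) | e n ⊆ U ∧ (q : X) ∈ V' n},
      fun n => ?_, ?_⟩
    · by_cases hsubU : e n ⊆ U
      · have heq : {q : ↥(Subtype.val '' t : Set X) | e n ⊆ U ∧ (q : X) ∈ V' n}
            = (fun q : ↥(Subtype.val '' t : Set X) => (q : X)) ⁻¹' V' n := by
          ext q; simp [hsubU]
        show IsGδ {q : ↥(Subtype.val '' t : Set X) | e n ⊆ U ∧ (q : X) ∈ V' n}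
        rw [heq]
        exact ((hV'o n).preimage continuous_subtype_val).isGδ
      · have heq : {q : ↥(Subtype.val '' t : Set X) | e n ⊆ U ∧ (q : X) ∈ V' n} = ∅ := by
          ext q; simp [hsubU]
        show IsGδ {q : ↥(Subtype.val '' t : Set X) | e n ⊆ U ∧ (q : X) ∈ V' n}
        rw [heq]
        exact IsGδ.empty
    · ext p
      simp only [mem_setOf_eq, mem_iUnion]
      constructor
      · rintro ⟨y, hyU, hyF⟩
        obtain ⟨V, hVb, hyV, hVU⟩ := hbN.exists_subset_of_mem_open hyU hU
        obtain ⟨n, rfl⟩ := (he ▸ mem_insert_of_mem _ hVb : V ∈ range e)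
        refine ⟨n, hVU, ?_⟩
        obtain ⟨z, hzt, hzval⟩ := p.2
        have hzA : z ∈ (Subtype.val ⁻¹' (A n) : Set ↥X₀) := by
          show z.1 ∈ A n
          rw [hzval]
          exact ⟨(p.1, y), ⟨hyF, mem_univ _, hyV⟩, rfl⟩
        have hzR := mem_iInter.1 (htR hzt) n
        have hzO : z ∈ O' n := (mem_setOf_eq ▸ hzR).1 hzA
        show p.1 ∈ V' n
        rw [← hzval]
        rw [← hV'pre n] at hzO
        exact hzO
      · rintro ⟨n, hsubU, hpn⟩
        · obtain ⟨z, hzt, hzval⟩ := p.2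
          have hzO : z ∈ O' n := by
            rw [← hV'pre n]
            show z.1 ∈ V' n
            rw [hzval]
            exact hpn
          have hzR := mem_iInter.1 (htR hzt) n
          have hzA : z.1 ∈ A n := (mem_setOf_eq ▸ hzR).2 hzO
          rw [hzval] at hzA
          obtain ⟨q, ⟨hqF, -, hq2⟩, hq1⟩ := hzA
          refine ⟨q.2, hsubU hq2, ?_⟩
          rw [← hq1]
          simpa using hqF
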